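/- Fix constants c > 0, Λ < 0, κ > 0 and α, β, γ ∈ ℝ with α ≠ 0, and write m = √(−Λ). Define B(t,r) = β·sin(c·m·t) + γ·cos(c·m·t) + α·cosh(c·m·r), C(r) = sinh(c·m·r)/m, and μ(t,r) = 2αΛ·cosh(c·m·r)/(κ·B(t,r)). Then at every point (t,r) with B(t,r) ≠ 0 and C(r) ≠ 0 the five reduced Einstein field equations hold: (E1) −∂ᵣᵣB/B − C''/C − (∂ᵣB/B)(C'/C) = κμc² + c²Λ; (E2) ∂ₜ∂ᵣB = 0; (E3) ∂ₜₜB/B − (∂ᵣB/B)(C'/C) = c²Λ; (E4) −C''/C = c²Λ; (E5) (∂ₜₜB − ∂ᵣᵣB)/B = c²Λ. Moreover the regular-axis conditions hold: C(0) = 0 and C'(0)² = c². -/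

import Mathlib

private lemma hd_cosh (a k x : ℝ) :
    HasDerivAt (fun y : ℝ => a * Real.cosh (k * y)) (a * k * Real.sinh (k * x)) x := by
  have h := ((Real.hasDerivAt_cosh (k * x)).comp x ((hasDerivAt_id x).const_mul k))
  simpa [Function.comp, mul_comm, mul_assoc, mul_left_comm] using h.const_mul a

private lemma hd_sinh (a k x : ℝ) :
    HasDerivAt (fun y : ℝ => a * Real.sinh (k * y)) (a * k * Real.cosh (k * x)) x := by
  have h := ((Real.hasDerivAt_sinh (k * x)).comp x ((hasDerivAt_id x).const_mul k))
  simpa [Function.comp, mul_comm, mul_assoc, mul_left_comm] using h.const_mul a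

private lemma hd_sin (a k x : ℝ) :
    HasDerivAt (fun y : ℝ => a * Real.sin (k * y)) (a * k * Real.cos (k * x)) x := by
  have h := ((Real.hasDerivAt_sin (k * x)).comp x ((hasDerivAt_id x).const_mul k))
  simpa [Function.comp, mul_comm, mul_assoc, mul_left_comm] using h.const_mul a

private lemma hd_cos (a k x : ℝ) :
    HasDerivAt (fun y : ℝ => a * Real.cos (k * y)) (-(a * k * Real.sin (k * x))) x := by
  have h := ((Real.hasDerivAt_cos (k * x)).comp x ((hasDerivAt_id x).const_mul k))
  have h2 := h.const_mul a
  simp only [Function.comp] at h2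
  exact h2.congr_deriv (by ring)

private lemma hd_trig (b g k x : ℝ) :
    HasDerivAt (fun y : ℝ => b * Real.sin (k * y) + g * Real.cos (k * y))
      (b * k * Real.cos (k * x) - g * k * Real.sin (k * x)) x := by
  have := (hd_sin b k x).add (hd_cos g k x)
  exact this.congr_deriv (by ring)

/-- For `Λ < 0`, writing `m = √(−Λ)`, the functions
`B(t,r) = β·sin(c·m·t) + γ·cos(c·m·t) + α·cosh(c·m·r)`, `C(r) = sinh(c·m·r)/m` and
`μ(t,r) = 2αΛ·cosh(c·m·r)/(κ·B(t,r))` satisfy the five reduced Einstein field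
equations (E1)–(E5) of cylindrically symmetric `Λ`-dust with constant lapse `c`,
together with the regular-axis conditions `C(0) = 0`, `C'(0)² = c²`. -/
theorem new_solution_negative_Lambda
    (c Λ κ α β γ m : ℝ) (hc : 0 < c) (hΛ : Λ < 0) (hκ : 0 < κ) (hα : α ≠ 0)
    (hm : m = Real.sqrt (-Λ))
    (B : ℝ → ℝ → ℝ) (C : ℝ → ℝ) (μ : ℝ → ℝ → ℝ)
    (hB : ∀ t r, B t r =
      β * Real.sin (c * m * t) + γ * Real.cos (c * m * t) + α * Real.cosh (c * m * r))
    (hC : ∀ r, C r = Real.sinh (c * m * r) / m)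
    (hμ : ∀ t r, μ t r = 2 * α * Λ * Real.cosh (c * m * r) / (κ * B t r)) :
    (∀ t r : ℝ, B t r ≠ 0 → C r ≠ 0 →
      -- (E1)
      (-(deriv (deriv (fun s => B t s)) r) / B t r
          - deriv (deriv C) r / C r
          - (deriv (fun s => B t s) r / B t r) * (deriv C r / C r)
          = κ * μ t r * c ^ 2 + c ^ 2 * Λ) ∧
      -- (E2)
      (deriv (fun s => deriv (fun x => B s x) r) t = 0) ∧
      -- (E3)
      (deriv (deriv (fun s => B s r)) t / B t r
          - (deriv (fun s => B t s) r / B t r) * (deriv C r / C r) = c ^ 2 * Λ) ∧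
      -- (E4)
      (-(deriv (deriv C) r) / C r = c ^ 2 * Λ) ∧
      -- (E5)
      ((deriv (deriv (fun s => B s r)) t - deriv (deriv (fun s => B t s)) r) / B t r
          = c ^ 2 * Λ)) ∧
    C 0 = 0 ∧ (deriv C 0) ^ 2 = c ^ 2 := by
  have hm2 : m ^ 2 = -Λ := by
    rw [hm, sq, Real.mul_self_sqrt (by linarith)]
  have hΛm : Λ = -(m ^ 2) := by linarith
  have hmpos : 0 < m := by rw [hm]; exact Real.sqrt_pos.mpr (by linarith)
  have hm0 : m ≠ 0 := ne_of_gt hmpos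
  have hκ0 : κ ≠ 0 := ne_of_gt hκ
  -- C and its derivatives
  have hCfun : C = fun r => (1 / m) * Real.sinh (c * m * r) := by
    funext r; rw [hC]; ring
  have hC1 : deriv C = fun r => (1 / m) * (c * m) * Real.cosh (c * m * r) := by
    funext r; rw [hCfun]; exact (hd_sinh (1 / m) (c * m) r).deriv
  have hC2 : deriv (deriv C) = fun r => (1 / m) * (c * m) * (c * m) * Real.sinh (c * m * r) := by
    funext r; rw [hC1]
    simpa [mul_assoc, mul_comm, mul_left_comm] using (hd_cosh ((1 / m) * (c * m)) (c * m) r).deriv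
  -- r-derivatives of B
  have hBr : ∀ t, deriv (fun s => B t s) = fun r => α * (c * m) * Real.sinh (c * m * r) := by
    intro t; funext r
    have : (fun s => B t s) = fun s =>
        (β * Real.sin (c * m * t) + γ * Real.cos (c * m * t)) + α * Real.cosh (c * m * s) := by
      funext s; rw [hB]
    rw [this]
    exact ((hd_cosh α (c * m) r).const_add _).deriv
  have hBrr : ∀ t, deriv (deriv (fun s => B t s)) =
      fun r => α * (c * m) * (c * m) * Real.cosh (c * m * r) := by
    intro t; funext r; rw [hBr]
    simpa [mul_assoc, mul_comm, mul_left_comm] using (hd_sinh (α * (c * m)) (c * m) r).deriv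
  -- t-derivatives of B
  have hBt : ∀ r, deriv (fun s => B s r) = fun t =>
      β * (c * m) * Real.cos (c * m * t) - γ * (c * m) * Real.sin (c * m * t) := by
    intro r; funext t
    have : (fun s => B s r) = fun s =>
        (β * Real.sin (c * m * s) + γ * Real.cos (c * m * s)) + α * Real.cosh (c * m * r) := by
      funext s; rw [hB]
    rw [this]
    exact ((hd_trig β γ (c * m) t).add_const _).deriv
  have hBtt : ∀ r t, deriv (deriv (fun s => B s r)) t =
      -(β * (c * m) * (c * m) * Real.sin (c * m * t))
        - γ * (c * m) * (c * m) * Real.cos (c * m * t) := by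
    intro r t; rw [hBt]
    have h := ((hd_cos (β * (c * m)) (c * m) t).sub (hd_sin (γ * (c * m)) (c * m) t)).deriv
    exact h
  refine ⟨?_, ?_, ?_⟩
  · intro t r hBne hCne
    have hsinh : Real.sinh (c * m * r) ≠ 0 := by
      intro h; apply hCne; rw [hC, h, zero_div]
    have hBne' : β * Real.sin (c * m * t) + γ * Real.cos (c * m * t)
        + α * Real.cosh (c * m * r) ≠ 0 := by rw [← hB]; exact hBne
    refine ⟨?_, ?_, ?_, ?_, ?_⟩
    · -- E1
      rw [hBrr, hC2, hBr, hC1, hμ, hC, hB]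
      simp only []
      field_simp
      rw [hΛm]; ring
    · -- E2
      have : (fun s => deriv (fun x => B s x) r) =
          fun _ => α * (c * m) * Real.sinh (c * m * r) := by
        funext s; rw [hBr]
      rw [this, deriv_const]
    · -- E3
      rw [hBtt, hBr, hC1, hC, hB]
      simp only []
      field_simp
      rw [hΛm]; ring
    · -- E4
      rw [hC2, hC]
      simp only []
      field_simp
      rw [mul_comm m c, mul_div_cancel_right₀ _ hsinh, hΛm]
    · -- E5
      rw [hBtt, hBrr, hB]
      simp only []
      field_simp
      rw [hΛm]; ring
  · rw [hC]; simp
  · rw [hC1]; simp; field_simp
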